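/- For a > 1, lim_{b→0⁺} ∫_0^1 (1 + a² + b² - 2av)·b / (((1-av)²+b²)·√(1-v²)) dv = π·√(a²-1), while lim_{b→0⁺} ∫_{-1}^0 (1 + a² + b² - 2av)·b / (((1-av)²+b²)·√(1-v²)) dv = 0. -/

import Mathlib

open Real Filter Topology MeasureTheory Set

lemma int_inv_sqrt : IntervalIntegrable (fun v : ℝ => 1 / Real.sqrt (1 - v ^ 2)) volume (-1) 1 := by
  apply intervalIntegral.intervalIntegrable_deriv_of_nonneg (g := Real.arcsin)
  · exact Real.continuous_arcsin.continuousOn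
  · intro x hx
    simp only [min_eq_left, max_eq_right, (by norm_num : (-1:ℝ) ≤ 1)] at hx
    exact Real.hasDerivAt_arcsin (ne_of_gt hx.1) (ne_of_lt hx.2)
  · intro x _
    positivity

lemma decomp (a : ℝ) {b v : ℝ} (hv : v ∈ Set.Icc (-1:ℝ) 1) :
    (1 + a ^ 2 + b ^ 2 - 2 * a * v) * b /
      (((1 - a * v) ^ 2 + b ^ 2) * Real.sqrt (1 - v ^ 2))
    = b * (1 / Real.sqrt (1 - v ^ 2)) +
      (a / π * (b / ((1 - a * v) ^ 2 + b ^ 2))) * (π * a * Real.sqrt (1 - v ^ 2)) := by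
  have hs : 0 ≤ 1 - v ^ 2 := by nlinarith [hv.1, hv.2]
  rcases eq_or_lt_of_le hs with h0 | h0
  · rw [← h0, Real.sqrt_zero]
    simp
  · set t := Real.sqrt (1 - v ^ 2) with htdef
    have ht : t ^ 2 = 1 - v ^ 2 := Real.sq_sqrt hs
    have ht0 : 0 < t := Real.sqrt_pos.mpr h0
    by_cases hD : (1 - a * v) ^ 2 + b ^ 2 = 0
    · have hb : b = 0 := by nlinarith [sq_nonneg (1 - a * v), sq_nonneg b]
      rw [hD, hb]; simp
    · field_simp
      linear_combination (-a^2 * b) * ht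

lemma phi_int (a : ℝ) (ha : 0 < a) {b : ℝ} (hb : 0 < b) :
    ∫ v in Set.Icc (0:ℝ) 1, (a / π * (b / ((1 - a * v) ^ 2 + b ^ 2)))
      = (Real.arctan ((a - 1) / b) + Real.arctan (1 / b)) / π := by
  rw [integral_Icc_eq_integral_Ioc, ← intervalIntegral.integral_of_le zero_le_one]
  have hbne : b ≠ 0 := ne_of_gt hb
  have hπ : (π : ℝ) ≠ 0 := Real.pi_ne_zero
  have key : ∀ v : ℝ, a / π * (b / ((1 - a * v) ^ 2 + b ^ 2))
      = (a / (π * b)) * (1 / (1 + ((a / b) * v + -(1 / b)) ^ 2)) := by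
    intro v
    have hD : (1 - a * v) ^ 2 + b ^ 2 ≠ 0 := by positivity
    have h2 : (1 + ((a / b) * v + -(1 / b)) ^ 2) ≠ 0 := by positivity
    field_simp
    ring
  simp only [key]
  rw [intervalIntegral.integral_const_mul,
    intervalIntegral.integral_comp_mul_add (fun x => 1 / (1 + x ^ 2))
      (by positivity : a / b ≠ 0) (-(1 / b))]
  simp only [mul_zero, mul_one, zero_add]
  rw [smul_eq_mul, integral_one_div_one_add_sq, Real.arctan_neg]
  have h1 : a / b + -(1 / b) = (a - 1) / b := by field_simp; ring
  rw [h1]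
  field_simp
  ring

lemma arctan_lim (c : ℝ) (hc : 0 < c) :
    Tendsto (fun b : ℝ => Real.arctan (c / b)) (nhdsWithin 0 (Set.Ioi 0)) (nhds (π / 2)) := by
  have h1 : Tendsto (fun b : ℝ => c / b) (nhdsWithin 0 (Set.Ioi 0)) atTop := by
    simp only [div_eq_mul_inv]
    exact tendsto_inv_nhdsGT_zero.const_mul_atTop hc
  exact (Real.tendsto_arctan_atTop.mono_right nhdsWithin_le_nhds).comp h1

lemma peak_lim (a : ℝ) (ha : 1 < a) :
    Tendsto (fun b : ℝ => ∫ v in Set.Icc (0:ℝ) 1,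
        (a / π * (b / ((1 - a * v) ^ 2 + b ^ 2))) • (π * a * Real.sqrt (1 - v ^ 2)))
      (nhdsWithin 0 (Set.Ioi 0)) (nhds (π * Real.sqrt (a ^ 2 - 1))) := by
  have ha0 : 0 < a := lt_trans one_pos ha
  have hπ : (0:ℝ) < π := Real.pi_pos
  have hx₀ : (1/a) ∈ Set.Icc (0:ℝ) 1 := by
    constructor
    · positivity
    · rw [div_le_one ha0]; linarith
  apply tendsto_setIntegral_peak_smul_of_integrableOn_of_tendsto
    (x₀ := 1/a) measurableSet_Icc measurableSet_Icc (subset_refl _) self_mem_nhdsWithin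
  · exact (measure_Icc_lt_top).ne
  · -- nonneg
    filter_upwards [self_mem_nhdsWithin] with b hb x hx
    have hb' : (0:ℝ) < b := hb
    have hD : 0 < (1 - a * x) ^ 2 + b ^ 2 := by positivity
    positivity
  · -- uniform convergence away from 1/a
    intro u hu hxu
    rcases Metric.isOpen_iff.mp hu _ hxu with ⟨ε, hε, hball⟩
    rw [Metric.tendstoUniformlyOn_iff]
    intro ε' hε'
    set C := 1 / (π * a * ε ^ 2) with hC
    have hC0 : 0 < C := by positivity
    filter_upwards [Ioo_mem_nhdsGT_of_mem (c := (0:ℝ)) (a := ε' / (C + 1)) (Set.mem_Ico.mpr ⟨le_refl 0, by positivity⟩)]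
      with b hb x hxs
    obtain ⟨hb0, hbδ⟩ : 0 < b ∧ b < ε' / (C + 1) := ⟨hb.1, hb.2⟩
    have hd : ε ≤ |x - 1/a| := by
      by_contra h
      push_neg at h
      exact hxs.2 (hball (by rwa [Metric.mem_ball, Real.dist_eq]))
    have h1ax : (1 - a * x) = a * (1/a - x) := by field_simp
    have hsq : a ^ 2 * ε ^ 2 ≤ (1 - a * x) ^ 2 := by
      rw [h1ax, mul_pow]
      have : ε ^ 2 ≤ (1/a - x) ^ 2 := by
        have h2 : ε ^ 2 ≤ |x - 1/a| ^ 2 := by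
          apply pow_le_pow_left₀ hε.le hd
        rw [sq_abs] at h2
        nlinarith
      nlinarith [sq_nonneg a]
    have hD : a ^ 2 * ε ^ 2 ≤ (1 - a * x) ^ 2 + b ^ 2 := by nlinarith [sq_nonneg b]
    have hD0 : 0 < (1 - a * x) ^ 2 + b ^ 2 := by positivity
    have hφle : a / π * (b / ((1 - a * x) ^ 2 + b ^ 2)) ≤ C * b := by
      have h3 : b / ((1 - a * x) ^ 2 + b ^ 2) ≤ b / (a ^ 2 * ε ^ 2) :=
        div_le_div_of_nonneg_left hb0.le (by positivity) hD
      calc a / π * (b / ((1 - a * x) ^ 2 + b ^ 2)) ≤ a / π * (b / (a ^ 2 * ε ^ 2)) := by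
            apply mul_le_mul_of_nonneg_left h3 (by positivity)
        _ = C * b := by rw [hC]; field_simp
    have hφ0 : 0 ≤ a / π * (b / ((1 - a * x) ^ 2 + b ^ 2)) := by positivity
    have : dist (0:ℝ) (a / π * (b / ((1 - a * x) ^ 2 + b ^ 2)))
        = a / π * (b / ((1 - a * x) ^ 2 + b ^ 2)) := by
      rw [Real.dist_eq, zero_sub, abs_neg, abs_of_nonneg hφ0]
    rw [Pi.zero_apply, this]
    have : C * b < ε' := by
      have h4 : C * b < C * (ε' / (C + 1)) := by
        exact mul_lt_mul_of_pos_left hbδ hC0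
      have h5 : C * (ε' / (C + 1)) < ε' := by
        rw [mul_div_assoc']
        rw [div_lt_iff₀ (by positivity)]
        nlinarith
      linarith
    linarith
  · -- integral tends to 1
    have heq : ∀ᶠ b in nhdsWithin (0:ℝ) (Set.Ioi 0),
        (∫ v in Set.Icc (0:ℝ) 1, (a / π * (b / ((1 - a * v) ^ 2 + b ^ 2))))
          = (Real.arctan ((a - 1) / b) + Real.arctan (1 / b)) / π := by
      filter_upwards [self_mem_nhdsWithin] with b hb
      exact phi_int a ha0 hb
    have hlim : Tendsto (fun b : ℝ => (Real.arctan ((a - 1) / b) + Real.arctan (1 / b)) / π)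
        (nhdsWithin 0 (Set.Ioi 0)) (nhds ((π / 2 + π / 2) / π)) := by
      exact (Tendsto.add (arctan_lim (a - 1) (by linarith)) (arctan_lim 1 one_pos)).div_const π
    have : (π / 2 + π / 2) / π = 1 := by field_simp; norm_num
    rw [this] at hlim
    exact hlim.congr' (by filter_upwards [heq] with b h using h.symm)
  · -- measurability
    filter_upwards [self_mem_nhdsWithin] with b hb
    have hb' : (0:ℝ) < b := hb
    apply Continuous.aestronglyMeasurable
    apply Continuous.mul continuous_const
    apply Continuous.div continuous_const
    · fun_prop
    · intro x
      positivity
  · -- g integrable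
    apply ContinuousOn.integrableOn_compact isCompact_Icc
    apply Continuous.continuousOn
    fun_prop
  · -- g tendsto at 1/a
    have hg : Continuous (fun v : ℝ => π * a * Real.sqrt (1 - v ^ 2)) := by fun_prop
    have := (hg.continuousAt (x := 1/a)).continuousWithinAt (s := Set.Icc (0:ℝ) 1)
    have hval : π * a * Real.sqrt (1 - (1/a) ^ 2) = π * Real.sqrt (a ^ 2 - 1) := by
      rw [mul_assoc]
      congr 1
      rw [← Real.sqrt_sq ha0.le, ← Real.sqrt_mul (sq_nonneg a)]
      congr 1
      field_simp
      rw [Real.sq_sqrt (sq_nonneg a)]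
    rw [← hval]
    exact this.tendsto

theorem half_cone_mean_curvature_limits (a : ℝ) (ha : 1 < a) :
    Tendsto
      (fun b : ℝ => ∫ v in (0:ℝ)..1,
        (1 + a ^ 2 + b ^ 2 - 2 * a * v) * b /
          (((1 - a * v) ^ 2 + b ^ 2) * Real.sqrt (1 - v ^ 2)))
      (nhdsWithin 0 (Set.Ioi 0)) (nhds (π * Real.sqrt (a ^ 2 - 1))) ∧
    Tendsto
      (fun b : ℝ => ∫ v in (-1:ℝ)..0,
        (1 + a ^ 2 + b ^ 2 - 2 * a * v) * b /
          (((1 - a * v) ^ 2 + b ^ 2) * Real.sqrt (1 - v ^ 2)))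
      (nhdsWithin 0 (Set.Ioi 0)) (nhds 0) := by
  have ha0 : 0 < a := lt_trans one_pos ha
  have hπ : (0:ℝ) < π := Real.pi_pos
  -- continuity of the phi*g product for b > 0
  have hcont : ∀ b : ℝ, 0 < b → Continuous (fun v : ℝ =>
      (a / π * (b / ((1 - a * v) ^ 2 + b ^ 2))) * (π * a * Real.sqrt (1 - v ^ 2))) := by
    intro b hb
    apply Continuous.mul
    · apply Continuous.mul continuous_const
      apply Continuous.div continuous_const (by fun_prop)
      intro x; positivity
    · fun_prop
  have hsub01 : Set.uIcc (0:ℝ) 1 ⊆ Set.uIcc (-1:ℝ) 1 := by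
    rw [Set.uIcc_of_le (by norm_num : (0:ℝ) ≤ 1), Set.uIcc_of_le (by norm_num : (-1:ℝ) ≤ 1)]
    exact Set.Icc_subset_Icc (by norm_num) le_rfl
  have hsub10 : Set.uIcc (-1:ℝ) 0 ⊆ Set.uIcc (-1:ℝ) 1 := by
    rw [Set.uIcc_of_le (by norm_num : (-1:ℝ) ≤ 0), Set.uIcc_of_le (by norm_num : (-1:ℝ) ≤ 1)]
    exact Set.Icc_subset_Icc le_rfl (by norm_num)
  have hInt01 : IntervalIntegrable (fun v : ℝ => 1 / Real.sqrt (1 - v ^ 2)) volume 0 1 :=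
    int_inv_sqrt.mono_set hsub01
  have hInt10 : IntervalIntegrable (fun v : ℝ => 1 / Real.sqrt (1 - v ^ 2)) volume (-1) 0 :=
    int_inv_sqrt.mono_set hsub10
  have hIccsub : ∀ {c d : ℝ}, Set.uIcc c d ⊆ Set.uIcc (-1:ℝ) 1 →
      Set.uIcc c d ⊆ Set.Icc (-1:ℝ) 1 := by
    intro c d h
    refine h.trans ?_
    rw [Set.uIcc_of_le (by norm_num : (-1:ℝ) ≤ 1)]
  set C1 : ℝ := ∫ v in (0:ℝ)..1, 1 / Real.sqrt (1 - v ^ 2) with hC1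
  set C2 : ℝ := ∫ v in (-1:ℝ)..0, 1 / Real.sqrt (1 - v ^ 2) with hC2
  have hC2nn : 0 ≤ C2 := by
    apply intervalIntegral.integral_nonneg (by norm_num : (-1:ℝ) ≤ 0)
    intro x _; positivity
  -- decomposition of the integrals for b > 0
  have key1 : ∀ b : ℝ, 0 < b →
      (∫ v in (0:ℝ)..1, (1 + a ^ 2 + b ^ 2 - 2 * a * v) * b /
          (((1 - a * v) ^ 2 + b ^ 2) * Real.sqrt (1 - v ^ 2)))
      = b * C1 + ∫ v in Set.Icc (0:ℝ) 1,
          (a / π * (b / ((1 - a * v) ^ 2 + b ^ 2))) • (π * a * Real.sqrt (1 - v ^ 2)) := by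
    intro b hb
    rw [intervalIntegral.integral_congr (g := fun v =>
        b * (1 / Real.sqrt (1 - v ^ 2)) +
        (a / π * (b / ((1 - a * v) ^ 2 + b ^ 2))) * (π * a * Real.sqrt (1 - v ^ 2)))
      (fun v hv => decomp a (hIccsub hsub01 hv))]
    rw [intervalIntegral.integral_add (hInt01.const_mul b)
      (((hcont b hb)).intervalIntegrable 0 1)]
    rw [intervalIntegral.integral_const_mul]
    congr 1
    rw [intervalIntegral.integral_of_le (by norm_num : (0:ℝ) ≤ 1),
      ← integral_Icc_eq_integral_Ioc]
    rfl
  have key2 : ∀ b : ℝ, 0 < b →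
      (∫ v in (-1:ℝ)..0, (1 + a ^ 2 + b ^ 2 - 2 * a * v) * b /
          (((1 - a * v) ^ 2 + b ^ 2) * Real.sqrt (1 - v ^ 2)))
      = b * C2 + ∫ v in (-1:ℝ)..0,
          (a / π * (b / ((1 - a * v) ^ 2 + b ^ 2))) * (π * a * Real.sqrt (1 - v ^ 2)) := by
    intro b hb
    rw [intervalIntegral.integral_congr (g := fun v =>
        b * (1 / Real.sqrt (1 - v ^ 2)) +
        (a / π * (b / ((1 - a * v) ^ 2 + b ^ 2))) * (π * a * Real.sqrt (1 - v ^ 2)))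
      (fun v hv => decomp a (hIccsub hsub10 hv))]
    rw [intervalIntegral.integral_add (hInt10.const_mul b)
      (((hcont b hb)).intervalIntegrable (-1) 0)]
    rw [intervalIntegral.integral_const_mul]
  have hbmul : ∀ c : ℝ, Tendsto (fun b : ℝ => b * c) (nhdsWithin 0 (Set.Ioi 0)) (nhds 0) := by
    intro c
    have h := Filter.tendsto_id.mono_left (nhdsWithin_le_nhds (a := (0:ℝ)) (s := Set.Ioi (0:ℝ)))
    have h2 := h.mul_const c
    simpa using h2
  constructor
  · have h := (hbmul C1).add (peak_lim a ha)
    rw [zero_add] at h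
    apply h.congr'
    filter_upwards [self_mem_nhdsWithin] with b hb
    exact (key1 b hb).symm
  · -- second limit
    have hbound : ∀ b : ℝ, 0 < b →
        ‖∫ v in (-1:ℝ)..0,
          (a / π * (b / ((1 - a * v) ^ 2 + b ^ 2))) * (π * a * Real.sqrt (1 - v ^ 2))‖
        ≤ a ^ 2 * b := by
      intro b hb
      have h := intervalIntegral.norm_integral_le_of_norm_le_const (C := a ^ 2 * b)
        (f := fun v => (a / π * (b / ((1 - a * v) ^ 2 + b ^ 2))) *
          (π * a * Real.sqrt (1 - v ^ 2))) (a := (-1:ℝ)) (b := (0:ℝ)) ?_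
      · simpa using h
      · intro x hx
        rw [Set.uIoc_of_le (by norm_num : (-1:ℝ) ≤ 0)] at hx
        have hx0 : x ≤ 0 := hx.2
        have hD : (1:ℝ) ≤ (1 - a * x) ^ 2 + b ^ 2 := by nlinarith [sq_nonneg b, mul_nonpos_of_nonneg_of_nonpos ha0.le hx0]
        have hD0 : (0:ℝ) < (1 - a * x) ^ 2 + b ^ 2 := by positivity
        have h1 : b / ((1 - a * x) ^ 2 + b ^ 2) ≤ b :=
          (div_le_iff₀ hD0).mpr (by nlinarith)
        have h2 : a / π * (b / ((1 - a * x) ^ 2 + b ^ 2)) ≤ a / π * b :=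
          mul_le_mul_of_nonneg_left h1 (by positivity)
        have h3 : Real.sqrt (1 - x ^ 2) ≤ 1 := Real.sqrt_le_one.mpr (by nlinarith)
        have h4 : π * a * Real.sqrt (1 - x ^ 2) ≤ π * a := by
          have h4' : π * a * Real.sqrt (1 - x ^ 2) ≤ π * a * 1 := by gcongr
          rwa [mul_one] at h4'
        have hφnn : 0 ≤ a / π * (b / ((1 - a * x) ^ 2 + b ^ 2)) := by positivity
        have hgnn : 0 ≤ π * a * Real.sqrt (1 - x ^ 2) := by positivity
        rw [Real.norm_eq_abs, abs_of_nonneg (mul_nonneg hφnn hgnn)]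
        calc (a / π * (b / ((1 - a * x) ^ 2 + b ^ 2))) * (π * a * Real.sqrt (1 - x ^ 2))
            ≤ (a / π * b) * (π * a) := mul_le_mul h2 h4 hgnn (by positivity)
          _ = a ^ 2 * b := by field_simp
    apply squeeze_zero_norm' (a := fun b : ℝ => b * (C2 + a ^ 2))
    · filter_upwards [self_mem_nhdsWithin] with b hb
      have hb' : (0:ℝ) < b := hb
      rw [key2 b hb']
      refine le_trans (norm_add_le _ _) ?_
      have e1 : ‖b * C2‖ = b * C2 := by
        rw [Real.norm_eq_abs, abs_of_nonneg (mul_nonneg hb'.le hC2nn)]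
      rw [e1]
      have := hbound b hb'
      linarith [this]
    · exact hbmul (C2 + a ^ 2)
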